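/- Let t ≥ 2 and k ≥ 1 be integers and set α_n = (2^{kn} − (−1)^n)/(2^k + 1) for n ≥ 0. Then for every natural number m, the coefficient of z^m in a_t(α_n; z) is eventually constant as n → ∞; consequently there is a formal power series H_k(z) ∈ ℤ[[z]], all of whose coefficients are 0 or 1, such that for every m the coefficient of z^m in a_t(α_n; z) equals the m-th coefficient of H_k for all sufficiently large n. -/

import Mathlib

open Polynomial

/-- The (Type 1) Stern polynomials `a_t(n; z) ∈ ℤ[z]` of Dilcher and Eriksen:
`a_t(0;z) = 0`, `a_t(1;z) = 1`, and for `n ≥ 1`,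
`a_t(2n;z) = z·a_t(n;z^t)`, `a_t(2n+1;z) = a_t(n+1;z^t) + a_t(n;z^t)`. -/
noncomputable def sternPoly (t : ℕ) : ℕ → Polynomial ℤ
  | 0 => 0
  | 1 => 1
  | n + 2 =>
    if h : (n + 2) % 2 = 0 then
      X * (sternPoly t ((n + 2) / 2)).comp (X ^ t)
    else
      (sternPoly t ((n + 2) / 2 + 1)).comp (X ^ t) +
        (sternPoly t ((n + 2) / 2)).comp (X ^ t)
decreasing_by all_goals omega

/-- `α_n = (2^{kn} - (-1)^n) / (2^k + 1)`, a nonnegative integer. -/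
def sternAlpha (k n : ℕ) : ℕ :=
  (((2 : ℤ) ^ (k * n) - (-1) ^ n) / (2 ^ k + 1)).toNat

namespace SternAux

lemma sp_even (t M : ℕ) : sternPoly t (2 * M) = X * (sternPoly t M).comp (X ^ t) := by
  match M with
  | 0 => simp [sternPoly]
  | m + 1 =>
    have h : 2 * (m + 1) = 2 * m + 2 := by ring
    rw [h, sternPoly]
    rw [dif_pos (by omega : (2 * m + 2) % 2 = 0)]
    rw [show (2 * m + 2) / 2 = m + 1 from by omega]

lemma sp_odd (t M : ℕ) : sternPoly t (2 * M + 1) =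
    (sternPoly t (M + 1)).comp (X ^ t) + (sternPoly t M).comp (X ^ t) := by
  match M with
  | 0 => simp [sternPoly]
  | m + 1 =>
    have h : 2 * (m + 1) + 1 = (2 * m + 1) + 2 := by ring
    rw [h, sternPoly]
    rw [dif_neg (by omega : ¬ ((2 * m + 1 + 2) % 2 = 0))]
    rw [show (2 * m + 1 + 2) / 2 = m + 1 from by omega]

/-- coefficient of `f.comp (X^t)` -/
lemma coeff_compXpow {t : ℕ} (ht : 0 < t) (f : ℤ[X]) (j : ℕ) :
    (f.comp (X ^ t)).coeff j = if t ∣ j then f.coeff (j / t) else 0 := by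
  rw [← Polynomial.expand_eq_comp_X_pow]
  exact Polynomial.coeff_expand ht f j

lemma coeff_X_mul' (p : ℤ[X]) (e : ℕ) :
    (X * p).coeff e = if 1 ≤ e then p.coeff (e - 1) else 0 := by
  cases e with
  | zero => simp [Polynomial.mul_coeff_zero]
  | succ n => simp [Polynomial.coeff_X_mul]

/-- all coefficients of Stern polynomials are nonnegative -/
lemma sp_nonneg (t : ℕ) (ht : 0 < t) : ∀ M e, 0 ≤ (sternPoly t M).coeff e := by
  intro M
  induction M using Nat.strong_induction_on with
  | _ M ih =>
    intro e
    match M with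
    | 0 => simp [sternPoly]
    | 1 =>
      rw [show sternPoly t 1 = 1 from by simp [sternPoly], Polynomial.coeff_one]
      split <;> norm_num
    | M + 2 =>
      rcases Nat.even_or_odd (M + 2) with hpar | hpar
      · obtain ⟨r, hr⟩ := hpar
        rw [show M + 2 = 2 * r from by omega, sp_even, coeff_X_mul']
        rw [coeff_compXpow ht]
        split_ifs with h1 h2
        · exact ih r (by omega) _
        · exact le_refl 0
        · exact le_refl 0
      · obtain ⟨r, hr⟩ := hpar
        rw [show M + 2 = 2 * r + 1 from by omega, sp_odd, Polynomial.coeff_add,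
          coeff_compXpow ht, coeff_compXpow ht]
        have h1 : 0 ≤ (sternPoly t (r + 1)).coeff (e / t) := ih (r + 1) (by omega) _
        have h2 : 0 ≤ (sternPoly t r).coeff (e / t) := ih r (by omega) _
        split <;> omega

/-- key invariant: coefficients of consecutive Stern polynomials sum to at most 1 -/
lemma sp_pair_le (t : ℕ) (ht : 2 ≤ t) :
    ∀ M e, (sternPoly t M).coeff e + (sternPoly t (M + 1)).coeff e ≤ 1 := by
  have ht0 : 0 < t := by omega
  intro M
  induction M using Nat.strong_induction_on with
  | _ M ih =>
    intro e
    match M with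
    | 0 =>
      rw [show sternPoly t 0 = 0 from by simp [sternPoly],
        show sternPoly t 1 = 1 from by simp [sternPoly], Polynomial.coeff_zero,
        Polynomial.coeff_one]
      split <;> norm_num
    | M + 1 =>
      have hdvd : ∀ e : ℕ, 1 ≤ e → t ∣ e → t ∣ e - 1 → False := by
        intro e he h1 h2
        have h3 : t ∣ e - (e - 1) := Nat.dvd_sub h1 h2
        rw [show e - (e - 1) = 1 from by omega] at h3
        have := Nat.le_of_dvd one_pos h3
        omega
      rcases Nat.even_or_odd M with hpar | hpar
      · -- M + 1 = 2r + 1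
        obtain ⟨r, hr⟩ := hpar
        rw [show M + 1 = 2 * r + 1 from by omega,
          show 2 * r + 1 + 1 = 2 * (r + 1) from by ring, sp_odd, sp_even,
          Polynomial.coeff_add, coeff_X_mul', coeff_compXpow ht0, coeff_compXpow ht0,
          coeff_compXpow ht0]
        have ihr := ih r (by omega) (e / t)
        have ihr2 := ih r (by omega) ((e - 1) / t)
        have n1 := sp_nonneg t ht0 r ((e - 1) / t)
        have n2 := sp_nonneg t ht0 (r + 1) (e / t)
        split_ifs with h1 h2 h3 h4 h5 <;> try omega
        all_goals exact (hdvd e (by omega) (by assumption) (by assumption)).elim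
      · -- M + 1 = 2r + 2
        obtain ⟨r, hr⟩ := hpar
        rw [show M + 1 = 2 * (r + 1) from by omega,
          show 2 * (r + 1) + 1 = 2 * (r + 1) + 1 from rfl, sp_even, sp_odd,
          Polynomial.coeff_add, coeff_X_mul', coeff_compXpow ht0, coeff_compXpow ht0,
          coeff_compXpow ht0]
        have ihr := ih (r + 1) (by omega) (e / t)
        have ihr2 := ih (r + 1) (by omega) ((e - 1) / t)
        have n1 := sp_nonneg t ht0 (r + 1 + 1) ((e - 1) / t)
        have n2 := sp_nonneg t ht0 (r + 1) ((e - 1) / t)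
        have n3 := sp_nonneg t ht0 (r + 1 + 1) (e / t)
        have n4 := sp_nonneg t ht0 (r + 1) (e / t)
        split_ifs with h1 h2 h3 h4 h5 <;> try omega
        all_goals exact (hdvd e (by omega) (by assumption) (by assumption)).elim

lemma sp_coeff01 (t : ℕ) (ht : 2 ≤ t) (M e : ℕ) :
    (sternPoly t M).coeff e = 0 ∨ (sternPoly t M).coeff e = 1 := by
  have h1 := sp_pair_le t ht M e
  have h2 := sp_nonneg t (by omega) M e
  have h3 := sp_nonneg t (by omega) (M + 1) e
  omega

/-! ### the pair step -/

noncomputable def stepP (t : ℕ) (pq : ℤ[X] × ℤ[X]) : ℤ[X] × ℤ[X] :=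
  (X * pq.1.comp (X ^ t), pq.1.comp (X ^ t) + pq.2.comp (X ^ t))

lemma step_pair (t M : ℕ) :
    stepP t (sternPoly t M, sternPoly t (M + 1)) =
      (sternPoly t (2 * M), sternPoly t (2 * M + 1)) := by
  simp only [stepP]
  rw [sp_even, sp_odd]
  exact congrArg₂ Prod.mk rfl (add_comm _ _)

lemma step_rpair (t M : ℕ) :
    stepP t (sternPoly t (M + 1), sternPoly t M) =
      (sternPoly t (2 * M + 2), sternPoly t (2 * M + 1)) := by
  simp only [stepP]
  rw [show 2 * M + 2 = 2 * (M + 1) from by ring, sp_even, sp_odd]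

lemma iter_pair (t : ℕ) : ∀ (j M : ℕ),
    (stepP t)^[j] (sternPoly t M, sternPoly t (M + 1)) =
      (sternPoly t (2 ^ j * M), sternPoly t (2 ^ j * M + 1)) := by
  intro j
  induction j with
  | zero => intro M; simp
  | succ j ih =>
    intro M
    rw [Function.iterate_succ_apply', ih, step_pair,
      show 2 * (2 ^ j * M) = 2 ^ (j + 1) * M from by ring]

lemma iter_rpair (t : ℕ) : ∀ (j M : ℕ), ∃ L,
    2 ^ j * (M + 1) = L + 1 ∧
    (stepP t)^[j] (sternPoly t (M + 1), sternPoly t M) =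
      (sternPoly t (L + 1), sternPoly t L) := by
  intro j
  induction j with
  | zero => intro M; exact ⟨M, by omega, rfl⟩
  | succ j ih =>
    intro M
    obtain ⟨L, hL, hiter⟩ := ih M
    refine ⟨2 * L + 1, by rw [show (2:ℕ) ^ (j+1) = 2 * 2 ^ j from by ring, mul_assoc]; omega, ?_⟩
    rw [Function.iterate_succ_apply', hiter,
      show (2 * L + 1) + 1 = 2 * L + 2 from rfl, step_rpair]

/-! ### the alpha sequence -/

lemma alpha_exists (k : ℕ) : ∀ n : ℕ, ∃ y : ℕ,
    (2 : ℤ) ^ (k * n) - (-1) ^ n = (2 ^ k + 1) * (y : ℤ) ∧ sternAlpha k n = y := by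
  have hne : ((2 : ℤ) ^ k + 1) ≠ 0 := by positivity
  intro n
  induction n with
  | zero =>
    refine ⟨0, by norm_num, ?_⟩
    simp [sternAlpha]
  | succ n ih =>
    obtain ⟨y, hy, hs⟩ := ih
    have key : (2 : ℤ) ^ (k * (n + 1)) - (-1) ^ (n + 1) =
        (2 ^ k + 1) * (2 ^ k * (y : ℤ) + (-1) ^ n) := by
      have h2 : (2 : ℤ) ^ (k * (n + 1)) = 2 ^ k * 2 ^ (k * n) := by
        rw [← pow_add]; ring_nf
      rw [h2, show (2 : ℤ) ^ (k * n) = (2 ^ k + 1) * y + (-1) ^ n from by omega]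
      rw [pow_succ]
      ring
    have hynn : 0 ≤ 2 ^ k * (y : ℤ) + (-1) ^ n := by
      rcases Nat.even_or_odd n with he | ho
      · rw [he.neg_one_pow]; positivity
      · rw [ho.neg_one_pow]
        -- need y ≥ 1 : from hy, 2^(kn) - (-1)^n = 2^(kn) + 1 ≥ 2 > 0
        have h1 : (2 : ℤ) ^ (k * n) - (-1) ^ n ≥ 1 := by
          rw [ho.neg_one_pow]
          have : (0 : ℤ) < 2 ^ (k * n) := by positivity
          omega
        have hy1 : (1 : ℤ) ≤ y := by
          by_contra hy0
          push_neg at hy0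
          have : (y : ℤ) = 0 := by exact_mod_cast by omega
          rw [this] at hy
          omega
        have h2k : (0 : ℤ) < 2 ^ k := by positivity
        nlinarith
    refine ⟨(2 ^ k * (y : ℤ) + (-1) ^ n).toNat, ?_, ?_⟩
    · rw [key, Int.toNat_of_nonneg hynn]
    · unfold sternAlpha
      rw [key, Int.mul_ediv_cancel_left _ hne]
  
lemma alpha_zero (k : ℕ) : sternAlpha k 0 = 0 := by
  simp [sternAlpha]

lemma alpha_succ_even (k n : ℕ) (hn : Even n) :
    sternAlpha k (n + 1) = 2 ^ k * sternAlpha k n + 1 := by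
  obtain ⟨y, hy, hs⟩ := alpha_exists k n
  obtain ⟨y', hy', hs'⟩ := alpha_exists k (n + 1)
  have hne : ((2 : ℤ) ^ k + 1) ≠ 0 := by positivity
  have key : (2 : ℤ) ^ (k * (n + 1)) - (-1) ^ (n + 1) =
      (2 ^ k + 1) * (2 ^ k * (y : ℤ) + 1) := by
    have h2 : (2 : ℤ) ^ (k * (n + 1)) = 2 ^ k * 2 ^ (k * n) := by
      rw [← pow_add]; ring_nf
    rw [h2, show (2 : ℤ) ^ (k * n) = (2 ^ k + 1) * y + (-1) ^ n from by omega,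
      hn.neg_one_pow, pow_succ, hn.neg_one_pow]
    ring
  rw [key] at hy'
  have : (y' : ℤ) = 2 ^ k * (y : ℤ) + 1 := by
    have := mul_left_cancel₀ hne hy'.symm
    omega
  rw [hs, hs']
  have hcast : ((2 ^ k * y + 1 : ℕ) : ℤ) = 2 ^ k * (y : ℤ) + 1 := by push_cast; ring
  exact_mod_cast this.trans hcast.symm

lemma alpha_succ_odd (k n : ℕ) (hn : Odd n) :
    sternAlpha k (n + 1) + 1 = 2 ^ k * sternAlpha k n := by
  obtain ⟨y, hy, hs⟩ := alpha_exists k n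
  obtain ⟨y', hy', hs'⟩ := alpha_exists k (n + 1)
  have hne : ((2 : ℤ) ^ k + 1) ≠ 0 := by positivity
  have key : (2 : ℤ) ^ (k * (n + 1)) - (-1) ^ (n + 1) =
      (2 ^ k + 1) * (2 ^ k * (y : ℤ) - 1) := by
    have h2 : (2 : ℤ) ^ (k * (n + 1)) = 2 ^ k * 2 ^ (k * n) := by
      rw [← pow_add]; ring_nf
    rw [h2, show (2 : ℤ) ^ (k * n) = (2 ^ k + 1) * y + (-1) ^ n from by omega,
      hn.neg_one_pow, pow_succ, hn.neg_one_pow]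
    ring
  rw [key] at hy'
  have : (y' : ℤ) = 2 ^ k * (y : ℤ) - 1 := by
    have := mul_left_cancel₀ hne hy'.symm
    omega
  rw [hs, hs']
  have : (y' : ℤ) + 1 = 2 ^ k * (y : ℤ) := by omega
  exact_mod_cast this

/-! ### the pair sequence -/

noncomputable def pseq (t k : ℕ) : ℕ → ℤ[X] × ℤ[X]
  | 0 => ((0 : ℤ[X]), (1 : ℤ[X]))
  | n + 1 => Prod.swap ((stepP t)^[k] (pseq t k n))

lemma pseq_eq (t k : ℕ) : ∀ n : ℕ,
    (Even n → pseq t k n = (sternPoly t (sternAlpha k n), sternPoly t (sternAlpha k n + 1)))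
    ∧ (Odd n → ∃ M, sternAlpha k n = M + 1 ∧
        pseq t k n = (sternPoly t (M + 1), sternPoly t M)) := by
  intro n
  induction n with
  | zero =>
    constructor
    · intro _
      rw [alpha_zero]
      show ((0 : ℤ[X]), (1 : ℤ[X])) = _
      rw [show sternPoly t 0 = 0 from by simp [sternPoly],
        show sternPoly t 1 = 1 from by simp [sternPoly]]
    · intro h; rcases h with ⟨a, ha⟩; omega
  | succ n ih =>
    rcases Nat.even_or_odd n with hpar | hpar
    · -- n even, n+1 odd
      have h1 := ih.1 hpar
      constructor
      · intro h; rcases h with ⟨a, ha⟩; rcases hpar with ⟨b, hb⟩; omega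
      · intro _
        refine ⟨2 ^ k * sternAlpha k n, ?_, ?_⟩
        · rw [alpha_succ_even k n hpar]
        · show Prod.swap ((stepP t)^[k] (pseq t k n)) = _
          rw [h1, iter_pair]
          rfl
    · -- n odd, n+1 even
      obtain ⟨M, hM, h2⟩ := ih.2 hpar
      constructor
      · intro _
        show Prod.swap ((stepP t)^[k] (pseq t k n)) = _
        rw [h2]
        obtain ⟨L, hL, hiter⟩ := iter_rpair t k M
        rw [hiter]
        have hα : sternAlpha k (n + 1) = L := by
          have := alpha_succ_odd k n hpar
          rw [hM] at this
          omega
        rw [hα]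
        rfl
      · intro h
        rcases h with ⟨a, ha⟩
        rcases hpar with ⟨b, hb⟩
        omega

lemma pseq_fst (t k n : ℕ) : (pseq t k n).1 = sternPoly t (sternAlpha k n) := by
  rcases Nat.even_or_odd n with h | h
  · rw [(pseq_eq t k n).1 h]
  · obtain ⟨M, hM, h2⟩ := (pseq_eq t k n).2 h
    rw [h2, hM]

/-! ### determinacy / stabilization -/

lemma step_det {t : ℕ} (ht : 2 ≤ t) (p q p' q' : ℤ[X]) (m : ℕ) (hm : 1 ≤ m)
    (hp : ∀ j, j < m → p.coeff j = p'.coeff j)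
    (hq : ∀ j, j < m → q.coeff j = q'.coeff j) :
    ∀ j, j ≤ m → (stepP t (p, q)).1.coeff j = (stepP t (p', q')).1.coeff j ∧
      (stepP t (p, q)).2.coeff j = (stepP t (p', q')).2.coeff j := by
  have ht0 : 0 < t := by omega
  intro j hj
  have hjt : j / t < m := by
    rcases Nat.eq_zero_or_pos j with h0 | h0
    · simp [h0]; omega
    · have := Nat.div_lt_self h0 (by omega : 1 < t)
      omega
  have hjt1 : (j - 1) / t < m := by
    have := Nat.div_le_self (j - 1) t
    omega
  constructor
  · simp only [stepP]
    rw [coeff_X_mul', coeff_X_mul', coeff_compXpow ht0, coeff_compXpow ht0]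
    split_ifs with h1 h2
    · exact hp _ hjt1
    · rfl
    · rfl
  · simp only [stepP]
    rw [Polynomial.coeff_add, Polynomial.coeff_add, coeff_compXpow ht0,
      coeff_compXpow ht0, coeff_compXpow ht0, coeff_compXpow ht0]
    split_ifs with h1
    · rw [hp _ hjt, hq _ hjt]
    · rfl

lemma iter_det' {t : ℕ} (ht : 2 ≤ t) (m : ℕ) (hm : 1 ≤ m) : ∀ (j : ℕ) (x y : ℤ[X] × ℤ[X]),
    (∀ i, i ≤ m → x.1.coeff i = y.1.coeff i ∧ x.2.coeff i = y.2.coeff i) →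
    (∀ i, i ≤ m → ((stepP t)^[j] x).1.coeff i = ((stepP t)^[j] y).1.coeff i ∧
      ((stepP t)^[j] x).2.coeff i = ((stepP t)^[j] y).2.coeff i) := by
  intro j
  induction j with
  | zero => intro x y h; exact h
  | succ j ih =>
    intro x y h
    rw [Function.iterate_succ_apply', Function.iterate_succ_apply']
    have ihx := ih x y h
    exact step_det ht _ _ _ _ m hm (fun i hi => (ihx i (le_of_lt hi)).1)
      (fun i hi => (ihx i (le_of_lt hi)).2)

lemma iter_det {t k : ℕ} (ht : 2 ≤ t) (hk : 1 ≤ k) (m : ℕ) (hm : 1 ≤ m)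
    (x y : ℤ[X] × ℤ[X])
    (h : ∀ i, i < m → x.1.coeff i = y.1.coeff i ∧ x.2.coeff i = y.2.coeff i) :
    ∀ i, i ≤ m → ((stepP t)^[k] x).1.coeff i = ((stepP t)^[k] y).1.coeff i ∧
      ((stepP t)^[k] x).2.coeff i = ((stepP t)^[k] y).2.coeff i := by
  obtain ⟨k', rfl⟩ : ∃ k', k = k' + 1 := ⟨k - 1, by omega⟩
  have h1 := step_det ht x.1 x.2 y.1 y.2 m hm (fun i hi => (h i hi).1) (fun i hi => (h i hi).2)
  intro i hi
  rw [Function.iterate_succ_apply, Function.iterate_succ_apply]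
  exact iter_det' ht m hm k' (stepP t (x.1, x.2)) (stepP t (y.1, y.2)) h1 i hi

lemma iter_fst_coeff_zero {t : ℕ} (ht : 2 ≤ t) {k : ℕ} (hk : 1 ≤ k) (x : ℤ[X] × ℤ[X]) :
    ((stepP t)^[k] x).1.coeff 0 = 0 := by
  obtain ⟨k', rfl⟩ : ∃ k', k = k' + 1 := ⟨k - 1, by omega⟩
  rw [Function.iterate_succ_apply']
  have h : (stepP t ((stepP t)^[k'] x)).1 = X * ((stepP t)^[k'] x).1.comp (X ^ t) := rfl
  rw [h, Polynomial.mul_coeff_zero, Polynomial.coeff_X_zero, zero_mul]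

lemma iter_snd_coeff_zero {t : ℕ} (ht : 2 ≤ t) : ∀ {k : ℕ}, 1 ≤ k → ∀ (x : ℤ[X] × ℤ[X]),
    ((stepP t)^[k] x).2.coeff 0 = x.1.coeff 0 + x.2.coeff 0 := by
  have ht0 : 0 < t := by omega
  intro k
  induction k with
  | zero => omega
  | succ k ih =>
    intro _ x
    rw [Function.iterate_succ_apply']
    have h : (stepP t ((stepP t)^[k] x)).2
        = ((stepP t)^[k] x).1.comp (X ^ t) + ((stepP t)^[k] x).2.comp (X ^ t) := rfl
    rw [h, Polynomial.coeff_add, coeff_compXpow ht0, coeff_compXpow ht0]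
    simp only [Nat.zero_div, if_pos (dvd_zero t)]
    rcases Nat.eq_zero_or_pos k with h0 | h0
    · subst h0; simp
    · rw [iter_fst_coeff_zero ht h0, ih h0 x, zero_add]

/-- cumulative stabilization -/
lemma stab (t k : ℕ) (ht : 2 ≤ t) (hk : 1 ≤ k) : ∀ m : ℕ, ∃ N : ℕ, ∀ n, N ≤ n →
    ∀ j, j ≤ m → (pseq t k (n + 1)).1.coeff j = (pseq t k n).1.coeff j ∧
      (pseq t k (n + 1)).2.coeff j = (pseq t k n).2.coeff j := by
  intro m
  induction m with
  | zero =>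
    refine ⟨1, ?_⟩
    intro n hn j hj
    interval_cases j
    obtain ⟨n', rfl⟩ : ∃ n', n = n' + 1 := ⟨n - 1, by omega⟩
    have e1 : ∀ l, (pseq t k (l + 1)).1.coeff 0 =
        (pseq t k l).1.coeff 0 + (pseq t k l).2.coeff 0 := by
      intro l
      show (Prod.swap ((stepP t)^[k] (pseq t k l))).1.coeff 0 = _
      rw [Prod.fst_swap, iter_snd_coeff_zero ht hk]
    have e2 : ∀ l, (pseq t k (l + 1)).2.coeff 0 = 0 := by
      intro l
      show (Prod.swap ((stepP t)^[k] (pseq t k l))).2.coeff 0 = 0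
      rw [Prod.snd_swap, iter_fst_coeff_zero ht hk]
    constructor
    · rw [e1 (n' + 1), e2 n']
      ring
    · rw [e2 (n' + 1), e2 n']
  | succ m ih =>
    obtain ⟨N, hN⟩ := ih
    refine ⟨N + 1, ?_⟩
    intro n hn
    obtain ⟨n', rfl⟩ : ∃ n', n = n' + 1 := ⟨n - 1, by omega⟩
    have hstep := iter_det ht hk (m + 1) (by omega) (pseq t k (n' + 1)) (pseq t k n')
      (fun i hi => hN n' (by omega) i (by omega))
    intro j hj
    have e : ∀ l, pseq t k (l + 1) = Prod.swap ((stepP t)^[k] (pseq t k l)) := fun l => rfl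
    rw [e (n' + 1), e n', Prod.fst_swap, Prod.fst_swap, Prod.snd_swap, Prod.snd_swap]
    exact ⟨(hstep j hj).2, (hstep j hj).1⟩

/-- the eventually constant statement, for the first components -/
lemma stab_const (t k : ℕ) (ht : 2 ≤ t) (hk : 1 ≤ k) (m : ℕ) : ∃ N : ℕ, ∀ n, N ≤ n →
    (pseq t k n).1.coeff m = (pseq t k N).1.coeff m := by
  obtain ⟨N, hN⟩ := stab t k ht hk m
  refine ⟨N, ?_⟩
  intro n hn
  induction n, hn using Nat.le_induction with
  | base => rfl
  | succ n hn ih =>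
    rw [(hN n hn m le_rfl).1, ih]

end SternAux

/-- For every `m`, the coefficient of `z^m` in `a_t(α_n; z)` is eventually constant as
`n → ∞`; consequently there is a formal power series `H_k(z) ∈ ℤ[[z]]`, all of whose
coefficients are `0` or `1`, such that for every `m` the coefficient of `z^m` in
`a_t(α_n; z)` equals the `m`-th coefficient of `H_k` for all sufficiently large `n`. -/
theorem sternPoly_alpha_coeff_eventually_constant (t k : ℕ) (ht : 2 ≤ t) (hk : 1 ≤ k) :
    (∀ m : ℕ, ∃ N : ℕ, ∀ n₁ n₂ : ℕ, N ≤ n₁ → N ≤ n₂ →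
        (sternPoly t (sternAlpha k n₁)).coeff m = (sternPoly t (sternAlpha k n₂)).coeff m) ∧
      ∃ H : PowerSeries ℤ,
        (∀ m : ℕ, PowerSeries.coeff (R := ℤ) m H = 0 ∨ PowerSeries.coeff (R := ℤ) m H = 1) ∧
          ∀ m : ℕ, ∃ N : ℕ, ∀ n : ℕ, N ≤ n →
            (sternPoly t (sternAlpha k n)).coeff m = PowerSeries.coeff (R := ℤ) m H := by
  have key : ∀ m : ℕ, ∃ N : ℕ, ∀ n, N ≤ n →
      (sternPoly t (sternAlpha k n)).coeff m = (sternPoly t (sternAlpha k N)).coeff m := by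
    intro m
    obtain ⟨N, hN⟩ := SternAux.stab_const t k ht hk m
    refine ⟨N, fun n hn => ?_⟩
    rw [← SternAux.pseq_fst, ← SternAux.pseq_fst, hN n hn]
  choose Nf hNf using key
  constructor
  · intro m
    exact ⟨Nf m, fun n₁ n₂ h₁ h₂ => by rw [hNf m n₁ h₁, hNf m n₂ h₂]⟩
  · refine ⟨PowerSeries.mk (fun m => (sternPoly t (sternAlpha k (Nf m))).coeff m), ?_, ?_⟩
    · intro m
      rw [PowerSeries.coeff_mk]
      exact SternAux.sp_coeff01 t ht _ m
    · intro m
      refine ⟨Nf m, fun n hn => ?_⟩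
      rw [PowerSeries.coeff_mk]
      exact hNf m n hn
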